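/- Strict transform intersection formula: in the setting of the (p,q)-weighted blow-up at a point of type (d;a,b), for ℚ-divisors C, D with (p,q)-multiplicities ν, μ at the point, the strict transforms satisfy Ĉ·D̂ = C·D − ν·μ/(d·p·q). -/
import Mathlib


/-- Strict transform intersection formula for the `(p,q)`-weighted blow-up `π` at a point
of normalized type `(d;a,b)`: if `C, D` have `(p,q)`-multiplicities `ν, μ` at the point,
then `Ĉ·D̂ = C·D − ν·μ/(dpq)`.  The setting is encoded via the total transform formulas
`π*(C) = Ĉ + (ν/e)E`, `π*(D) = D̂ + (μ/e)E`, `E² = −e²/(dpq)`, `E·Ĉ = eν/(dpq)`,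
`E·D̂ = eμ/(dpq)`, and the fact that `π*` preserves intersection numbers. -/
theorem strict_transform_intersection_weighted_blowup
    (d p q : ℕ) (a b : ℤ) (hd : 0 < d) (hp : 0 < p) (hq : 0 < q)
    (hpq : Nat.Coprime p q)
    (ha : Int.gcd (d : ℤ) a = 1) (hb : Int.gcd (d : ℤ) b = 1)
    (e : ℕ) (he : e = Int.gcd (d : ℤ) ((p : ℤ) * b - (q : ℤ) * a))
    (ν μ : ℚ)
    (VX VXh : Type*) [AddCommGroup VX] [Module ℚ VX] [AddCommGroup VXh] [Module ℚ VXh]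
    (B : VX →ₗ[ℚ] VX →ₗ[ℚ] ℚ) (Bh : VXh →ₗ[ℚ] VXh →ₗ[ℚ] ℚ)
    (hBsymm : ∀ x y : VXh, Bh x y = Bh y x)
    (π : VX →ₗ[ℚ] VXh)
    (hπ : ∀ D₁ D₂ : VX, Bh (π D₁) (π D₂) = B D₁ D₂)
    (C D : VX) (Chat Dhat E : VXh)
    (hC : π C = Chat + (ν / (e : ℚ)) • E)
    (hD : π D = Dhat + (μ / (e : ℚ)) • E)
    (hE2 : Bh E E = -(e : ℚ) ^ 2 / (d * p * q : ℚ))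
    (hEC : Bh E Chat = (e : ℚ) * ν / (d * p * q : ℚ))
    (hED : Bh E Dhat = (e : ℚ) * μ / (d * p * q : ℚ)) :
    Bh Chat Dhat = B C D - ν * μ / (d * p * q : ℚ) := by
  have he0 : (e : ℚ) ≠ 0 := by
    have : 0 < Int.gcd (d : ℤ) ((p : ℤ) * b - (q : ℤ) * a) := by
      apply Nat.pos_of_ne_zero
      intro h
      have : (d : ℤ) = 0 := Int.gcd_eq_zero_iff.mp h |>.1
      omega
    have : 0 < e := he ▸ this
    exact_mod_cast this.ne'
  have hdpq : ((d : ℚ) * p * q) ≠ 0 := by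
    have : (0:ℚ) < (d : ℚ) * p * q := by positivity
    exact this.ne'
  have key := hπ C D
  rw [hC, hD] at key
  simp only [map_add, map_smul, LinearMap.add_apply, LinearMap.smul_apply, smul_eq_mul] at key
  rw [hE2, hED, hBsymm Chat E, hEC] at key
  have h1 : Bh Chat Dhat = B C D - (μ / e) * ((e:ℚ) * ν / (d * p * q))
      - (ν / e) * ((e:ℚ) * μ / (d * p * q)) - (ν / e) * ((μ / e) * (-(e:ℚ)^2 / (d * p * q))) := by
    linarith [key]
  rw [h1]
  field_simp
  ring
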